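/- (Gauss–Kuzmin recursion.) Let G be a finite-index subgroup of GL(2,ℤ), P = GL(2,ℤ)/G, t₀ ∈ P the coset of the identity, and for x ∈ [0,1], t ∈ P, n ≥ 0 let m_n(x,t) be the Lebesgue measure of {α ∈ (0,1) irrational : x_n(α) ≤ x and g_n(α)⁻¹·t₀ = t}. Then for every n ≥ 0, x ∈ [0,1] and t ∈ P, m_{n+1}(x,t) = Σ_{k=1}^{∞} [ m_n(1/k, γ_k·t) − m_n(1/(x+k), γ_k·t) ], where γ_k := [[0,1],[1,k]]. -/

import Mathlib

open MeasureTheory Filter Matrix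

set_option synthInstance.maxHeartbeats 1000000
set_option maxHeartbeats 1000000

noncomputable section

/-- The Gauss map `x ↦ 1/x - ⌊1/x⌋`. -/
def gaussMap (x : ℝ) : ℝ := 1/x - ⌊(1/x : ℝ)⌋

/-- The continued fraction digit `k_n(α)` for `n ≥ 1`. -/
def cfK (α : ℝ) (n : ℕ) : ℤ := ⌊(1 / (gaussMap^[n-1] α) : ℝ)⌋

/-- The matrix `γ_k = [[0,1],[1,k]]` as an element of `GL(2,ℤ)`. -/
def gammaK (k : ℤ) : GL (Fin 2) ℤ :=
  ⟨!![0,1;1,k], !![-k,1;1,0],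
   by ext i j; fin_cases i <;> fin_cases j <;>
      simp [Matrix.mul_apply, Fin.sum_univ_two, Matrix.one_apply],
   by ext i j; fin_cases i <;> fin_cases j <;>
      simp [Matrix.mul_apply, Fin.sum_univ_two, Matrix.one_apply]⟩

/-- `g_n(α) = [[p_{n-1}(α), p_n(α)],[q_{n-1}(α), q_n(α)]] = γ_{k_1(α)} ⋯ γ_{k_n(α)}`. -/
def cfG (α : ℝ) (n : ℕ) : GL (Fin 2) ℤ :=
  ((List.range n).map (fun i => gammaK (cfK α (i+1)))).prod

/-- The measure `m_n(x,t)` of `{α ∈ (0,1) irrational : x_n(α) ≤ x, g_n(α)⁻¹ • t₀ = t}`,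
where `t₀` is the coset of the identity in `P = GL(2,ℤ)/G`. -/
def mGK (G : Subgroup (GL (Fin 2) ℤ)) (x : ℝ) (t : GL (Fin 2) ℤ ⧸ G) (n : ℕ) : ℝ :=
  (volume {α : ℝ | α ∈ Set.Ioo (0:ℝ) 1 ∧ Irrational α ∧ gaussMap^[n] α ≤ x ∧
       (cfG α n)⁻¹ • ((1 : GL (Fin 2) ℤ) : GL (Fin 2) ℤ ⧸ G) = t}).toReal

instance : Countable (Matrix (Fin 2) (Fin 2) ℤ) := by unfold Matrix; infer_instance
instance : Countable (GL (Fin 2) ℤ) := Units.val_injective.countable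

lemma measurable_gaussMap : Measurable gaussMap := by
  have h1 : Measurable (fun x : ℝ => (1:ℝ)/x) := by simpa [one_div] using measurable_inv
  exact h1.sub ((measurable_of_countable (Int.cast : ℤ → ℝ)).comp h1.floor)

lemma gaussMap_mem_Ioo {α : ℝ} (h1 : α ∈ Set.Ioo (0:ℝ) 1) (h2 : Irrational α) :
    gaussMap α ∈ Set.Ioo (0:ℝ) 1 := by
  have hinv : Irrational (1/α) := by rw [one_div]; exact h2.inv
  have heq : gaussMap α = Int.fract (1/α) := rfl
  rw [heq]
  refine ⟨?_, Int.fract_lt_one _⟩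
  rcases lt_or_eq_of_le (Int.fract_nonneg (1/α : ℝ)) with h | h
  · exact h
  · exfalso
    have hf : Int.fract (1/α : ℝ) = 1/α - ⌊(1/α : ℝ)⌋ := rfl
    exact hinv.ne_int ⌊(1/α : ℝ)⌋ (by rw [hf] at h; linarith)

lemma gaussMap_irrational {α : ℝ} (h2 : Irrational α) : Irrational (gaussMap α) := by
  have hinv : Irrational (1/α) := by rw [one_div]; exact h2.inv
  exact hinv.sub_intCast _

lemma iter_mem {α : ℝ} (h1 : α ∈ Set.Ioo (0:ℝ) 1) (h2 : Irrational α) (n : ℕ) :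
    gaussMap^[n] α ∈ Set.Ioo (0:ℝ) 1 ∧ Irrational (gaussMap^[n] α) := by
  induction n with
  | zero => exact ⟨h1, h2⟩
  | succ n ih =>
    rw [Function.iterate_succ_apply']
    exact ⟨gaussMap_mem_Ioo ih.1 ih.2, gaussMap_irrational ih.2⟩

lemma fiber_countable (n : ℕ) (c : ℝ) :
    Set.Countable {α : ℝ | α ∈ Set.Ioo (0:ℝ) 1 ∧ Irrational α ∧ gaussMap^[n] α = c} := by
  induction n generalizing c with
  | zero =>
    apply Set.Countable.mono _ (Set.countable_singleton c)
    rintro a ⟨_, _, h⟩; exact h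
  | succ n ih =>
    have hsub : {α : ℝ | α ∈ Set.Ioo (0:ℝ) 1 ∧ Irrational α ∧ gaussMap^[n+1] α = c}
        ⊆ ⋃ β ∈ {β : ℝ | β ∈ Set.Ioo (0:ℝ) 1 ∧ Irrational β ∧ gaussMap^[n] β = c},
            Set.range (fun k : ℤ => 1/((k:ℝ) + β)) := by
      rintro a ⟨ha1, ha2, ha3⟩
      rw [Function.iterate_succ_apply] at ha3
      refine Set.mem_biUnion ⟨gaussMap_mem_Ioo ha1 ha2, gaussMap_irrational ha2, ha3⟩ ?_
      refine ⟨⌊(1/a : ℝ)⌋, ?_⟩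
      have ha0 : a ≠ 0 := ne_of_gt ha1.1
      show 1/((⌊(1/a : ℝ)⌋ : ℝ) + gaussMap a) = a
      have : ((⌊(1/a : ℝ)⌋ : ℝ) + gaussMap a) = 1/a := by unfold gaussMap; ring
      rw [this, one_div_one_div]
    exact Set.Countable.mono hsub ((ih c).biUnion fun β _ => Set.countable_range _)

lemma fiber_null (n : ℕ) (c : ℝ) :
    volume {α : ℝ | α ∈ Set.Ioo (0:ℝ) 1 ∧ Irrational α ∧ gaussMap^[n] α = c} = 0 :=
  (fiber_countable n c).measure_zero _


lemma cfG_succ (α : ℝ) (n : ℕ) : cfG α (n+1) = cfG α n * gammaK (cfK α (n+1)) := by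
  unfold cfG
  rw [List.range_succ, List.map_append, List.prod_append, List.map_singleton,
    List.prod_singleton]

lemma measurableSet_cfK (m : ℕ) (k : ℤ) : MeasurableSet {α : ℝ | cfK α m = k} := by
  have h1 : Measurable fun α : ℝ => (1:ℝ)/(gaussMap^[m-1] α) := by
    have h2 := (measurable_gaussMap.iterate (m-1)).inv
    simp only [one_div]; exact h2
  exact h1.floor (MeasurableSet.singleton k)

lemma measurableSet_cfG (n : ℕ) (g : GL (Fin 2) ℤ) : MeasurableSet {α : ℝ | cfG α n = g} := by
  induction n generalizing g with
  | zero =>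
    by_cases h : (1 : GL (Fin 2) ℤ) = g
    · have he : {α : ℝ | cfG α 0 = g} = Set.univ := by
        ext a; simp [cfG, h]
      rw [he]; exact MeasurableSet.univ
    · have he : {α : ℝ | cfG α 0 = g} = ∅ := by
        ext a; simp only [Set.mem_setOf_eq, Set.mem_empty_iff_false, iff_false]
        intro hc; exact h (by simpa [cfG] using hc)
      rw [he]; exact MeasurableSet.empty
  | succ n ih =>
    have he : {α : ℝ | cfG α (n+1) = g} =
        ⋃ (p : GL (Fin 2) ℤ × ℤ) (_ : p.1 * gammaK p.2 = g),
          ({α : ℝ | cfG α n = p.1} ∩ {α : ℝ | cfK α (n+1) = p.2}) := by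
      ext a
      simp only [Set.mem_iUnion, Set.mem_inter_iff, Set.mem_setOf_eq]
      constructor
      · intro h
        exact ⟨(cfG a n, cfK a (n+1)), by rw [← h, cfG_succ], rfl, rfl⟩
      · rintro ⟨p, hp, h1, h2⟩
        rw [cfG_succ, h1, h2, hp]
    rw [he]
    exact MeasurableSet.iUnion fun p => MeasurableSet.iUnion fun _ =>
      (ih p.1).inter (measurableSet_cfK (n+1) p.2)

lemma measurableSet_coset (G : Subgroup (GL (Fin 2) ℤ)) (n : ℕ) (t : GL (Fin 2) ℤ ⧸ G) :
    MeasurableSet {α : ℝ | (cfG α n)⁻¹ • ((1 : GL (Fin 2) ℤ) : GL (Fin 2) ℤ ⧸ G) = t} := by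
  have he : {α : ℝ | (cfG α n)⁻¹ • ((1 : GL (Fin 2) ℤ) : GL (Fin 2) ℤ ⧸ G) = t} =
      ⋃ (g : GL (Fin 2) ℤ) (_ : g⁻¹ • ((1 : GL (Fin 2) ℤ) : GL (Fin 2) ℤ ⧸ G) = t),
        {α : ℝ | cfG α n = g} := by
    ext a
    simp only [Set.mem_iUnion, Set.mem_setOf_eq]
    constructor
    · intro h; exact ⟨cfG a n, h, rfl⟩
    · rintro ⟨g, hg, h⟩; rw [h]; exact hg
  rw [he]
  exact MeasurableSet.iUnion fun g => MeasurableSet.iUnion fun _ => measurableSet_cfG n g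

lemma measurableSet_mGKset (G : Subgroup (GL (Fin 2) ℤ)) (x : ℝ) (t : GL (Fin 2) ℤ ⧸ G) (n : ℕ) :
    MeasurableSet {α : ℝ | α ∈ Set.Ioo (0:ℝ) 1 ∧ Irrational α ∧ gaussMap^[n] α ≤ x ∧
      (cfG α n)⁻¹ • ((1 : GL (Fin 2) ℤ) : GL (Fin 2) ℤ ⧸ G) = t} := by
  have h1 : MeasurableSet {α : ℝ | Irrational α} := by
    have : {α : ℝ | Irrational α} = (Set.range ((↑) : ℚ → ℝ))ᶜ := rfl
    rw [this]
    exact (Set.countable_range _).measurableSet.compl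
  have h2 : MeasurableSet {α : ℝ | gaussMap^[n] α ≤ x} :=
    measurableSet_le (measurable_gaussMap.iterate n) measurable_const
  exact measurableSet_Ioo.inter (h1.inter (h2.inter (measurableSet_coset G n t)))

lemma coset_cond_iff (G : Subgroup (GL (Fin 2) ℤ)) (α : ℝ) (n : ℕ) (m : ℤ)
    (t : GL (Fin 2) ℤ ⧸ G) (hk : cfK α (n+1) = m) :
    ((cfG α (n+1))⁻¹ • ((1 : GL (Fin 2) ℤ) : GL (Fin 2) ℤ ⧸ G) = t) ↔
    ((cfG α n)⁻¹ • ((1 : GL (Fin 2) ℤ) : GL (Fin 2) ℤ ⧸ G) = gammaK m • t) := by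
  rw [cfG_succ, hk, _root_.mul_inv_rev, mul_smul, inv_smul_eq_iff]

lemma not_irr_one_div_nat (k : ℕ) : ¬ Irrational (1/((k:ℝ)+1)) := by
  have h : ((1/((k:ℚ)+1) : ℚ) : ℝ) = 1/((k:ℝ)+1) := by push_cast; ring
  rw [← h]
  exact Rat.not_irrational _

lemma digit_iff {y x : ℝ} (hy : y ∈ Set.Ioo (0:ℝ) 1) (hirr : Irrational y)
    (hx0 : 0 ≤ x) (hx1 : x ≤ 1) (k : ℕ) :
    (gaussMap y ≤ x ∧ ⌊(1/y : ℝ)⌋ = (k:ℤ)+1) ↔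
    (1/(x+(k:ℝ)+1) ≤ y ∧ y < 1/((k:ℝ)+1)) := by
  obtain ⟨hy0, hy1⟩ := hy
  have hinv_pos : (0:ℝ) < 1/y := by positivity
  have hinv_irr : Irrational (1/y) := by rw [one_div]; exact hirr.inv
  have hxk : (0:ℝ) < x + (k:ℝ) + 1 := by positivity
  have hk1 : (0:ℝ) < (k:ℝ) + 1 := by positivity
  constructor
  · rintro ⟨h1, h2⟩
    have hfl : ((k:ℝ)+1) ≤ 1/y := by
      have h := Int.floor_le (1/y : ℝ); rw [h2] at h; push_cast at h; linarith
    have hg : gaussMap y = 1/y - ((k:ℝ)+1) := by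
      unfold gaussMap; rw [h2]; push_cast; ring
    have hle : 1/y ≤ x + (k:ℝ) + 1 := by rw [hg] at h1; linarith
    constructor
    · have h := one_div_le_one_div_of_le hinv_pos hle
      rwa [one_div_one_div] at h
    · have hne : 1/y ≠ (k:ℝ)+1 := by
        intro h; exact hinv_irr.ne_int ((k:ℤ)+1) (by push_cast; linarith)
      have hlt : ((k:ℝ)+1) < 1/y := lt_of_le_of_ne hfl (Ne.symm hne)
      have h := one_div_lt_one_div_of_lt hk1 hlt
      rwa [one_div_one_div] at h
  · rintro ⟨h1, h2⟩
    have hlt : ((k:ℝ)+1) < 1/y := by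
      have h := one_div_lt_one_div_of_lt hy0 h2
      rwa [one_div_one_div] at h
    have hle : 1/y ≤ x+(k:ℝ)+1 := by
      have h := one_div_le_one_div_of_le (by positivity : (0:ℝ) < 1/(x+(k:ℝ)+1)) h1
      rwa [one_div_one_div] at h
    have hne2 : 1/y ≠ (k:ℝ)+2 := by
      intro h; exact hinv_irr.ne_int ((k:ℤ)+2) (by push_cast; linarith)
    have hup : 1/y < (k:ℝ)+2 := lt_of_le_of_ne (by linarith) hne2
    have h2' : ⌊(1/y:ℝ)⌋ = (k:ℤ)+1 := by
      rw [Int.floor_eq_iff]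
      constructor <;> push_cast <;> linarith
    refine ⟨?_, h2'⟩
    unfold gaussMap; rw [h2']; push_cast; linarith


/-- **Gauss–Kuzmin recursion** (formula (0.8)):
`m_{n+1}(x,t) = Σ_{k≥1} [ m_n(1/k, γ_k·t) − m_n(1/(x+k), γ_k·t) ]`. -/
theorem gauss_kuzmin_recursion (G : Subgroup (GL (Fin 2) ℤ)) [G.FiniteIndex]
    (n : ℕ) (x : ℝ) (hx : x ∈ Set.Icc (0:ℝ) 1) (t : GL (Fin 2) ℤ ⧸ G) :
    mGK G x t (n+1) =
      ∑' k : ℕ, (mGK G (1/((k:ℝ)+1)) ((gammaK ((k:ℤ)+1)) • t) n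
        - mGK G (1/(x+(k:ℝ)+1)) ((gammaK ((k:ℤ)+1)) • t) n) := by
  obtain ⟨hx0, hx1⟩ := hx
  set t0 : GL (Fin 2) ℤ ⧸ G := ((1 : GL (Fin 2) ℤ) : GL (Fin 2) ℤ ⧸ G) with ht0
  set A : Set ℝ := {α : ℝ | α ∈ Set.Ioo (0:ℝ) 1 ∧ Irrational α ∧ gaussMap^[n+1] α ≤ x ∧
      (cfG α (n+1))⁻¹ • t0 = t} with hA
  set Ak : ℕ → Set ℝ := fun k => A ∩ {α : ℝ | cfK α (n+1) = (k:ℤ)+1} with hAkdef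
  set Bk : ℕ → Set ℝ := fun k => {α : ℝ | α ∈ Set.Ioo (0:ℝ) 1 ∧ Irrational α ∧
      gaussMap^[n] α ≤ 1/((k:ℝ)+1) ∧ (cfG α n)⁻¹ • t0 = gammaK ((k:ℤ)+1) • t} with hBkdef
  set Ck : ℕ → Set ℝ := fun k => {α : ℝ | α ∈ Set.Ioo (0:ℝ) 1 ∧ Irrational α ∧
      gaussMap^[n] α ≤ 1/(x+(k:ℝ)+1) ∧ (cfG α n)⁻¹ • t0 = gammaK ((k:ℤ)+1) • t} with hCkdef
  have hmeasA : MeasurableSet A := measurableSet_mGKset G x t (n+1)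
  have hmeasAk : ∀ k : ℕ, MeasurableSet (Ak k) :=
    fun k => hmeasA.inter (measurableSet_cfK (n+1) ((k:ℤ)+1))
  have hmeasCk : ∀ k : ℕ, MeasurableSet (Ck k) :=
    fun k => measurableSet_mGKset G (1/(x+(k:ℝ)+1)) (gammaK ((k:ℤ)+1) • t) n
  have hIoo : volume (Set.Ioo (0:ℝ) 1) ≠ ⊤ := measure_Ioo_lt_top.ne
  have hBfin : ∀ k : ℕ, volume (Bk k) ≠ ⊤ :=
    fun k => ne_top_of_le_ne_top hIoo (measure_mono fun α h => h.1)
  have hCfin : ∀ k : ℕ, volume (Ck k) ≠ ⊤ :=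
    fun k => ne_top_of_le_ne_top hIoo (measure_mono fun α h => h.1)
  have hAfin : ∀ k : ℕ, volume (Ak k) ≠ ⊤ :=
    fun k => ne_top_of_le_ne_top hIoo (measure_mono fun α h => h.1.1)
  have hsub : ∀ k : ℕ, Ck k ⊆ Bk k := by
    intro k
    rintro α ⟨h1, h2, h3, h4⟩
    refine ⟨h1, h2, le_trans h3 ?_, h4⟩
    have hk1 : (0:ℝ) < (k:ℝ)+1 := by positivity
    exact one_div_le_one_div_of_le hk1 (by linarith)
  -- characterization of Ak
  have hAkE : ∀ k : ℕ, Ak k = {α : ℝ | (α ∈ Set.Ioo (0:ℝ) 1 ∧ Irrational α ∧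
      (cfG α n)⁻¹ • t0 = gammaK ((k:ℤ)+1) • t) ∧
      1/(x+(k:ℝ)+1) ≤ gaussMap^[n] α ∧ gaussMap^[n] α < 1/((k:ℝ)+1)} := by
    intro k
    ext α
    simp only [hAkdef, hA, Set.mem_inter_iff, Set.mem_setOf_eq]
    constructor
    · rintro ⟨⟨h1, h2, h3, h4⟩, h5⟩
      obtain ⟨hy, hyirr⟩ := iter_mem h1 h2 n
      rw [Function.iterate_succ_apply'] at h3
      have h5' : ⌊(1/(gaussMap^[n] α) : ℝ)⌋ = (k:ℤ)+1 := h5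
      have hd := (digit_iff hy hyirr hx0 hx1 k).mp ⟨h3, h5'⟩
      exact ⟨⟨h1, h2, (coset_cond_iff G α n ((k:ℤ)+1) t h5).mp h4⟩, hd.1, hd.2⟩
    · rintro ⟨⟨h1, h2, h4⟩, h5, h6⟩
      obtain ⟨hy, hyirr⟩ := iter_mem h1 h2 n
      have hd := (digit_iff hy hyirr hx0 hx1 k).mpr ⟨h5, h6⟩
      have hdig : cfK α (n+1) = (k:ℤ)+1 := hd.2
      refine ⟨⟨h1, h2, ?_, (coset_cond_iff G α n ((k:ℤ)+1) t hdig).mpr h4⟩, hdig⟩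
      rw [Function.iterate_succ_apply']
      exact hd.1
  -- A is the disjoint union of the Ak
  have hUnion : A = ⋃ k : ℕ, Ak k := by
    ext α
    simp only [Set.mem_iUnion, hAkdef, Set.mem_inter_iff, Set.mem_setOf_eq]
    constructor
    · intro hα
      obtain ⟨h1, h2, -, -⟩ := id hα
      obtain ⟨hy, _⟩ := iter_mem h1 h2 n
      have hpos : 1 ≤ cfK α (n+1) := by
        show (1:ℤ) ≤ ⌊(1/(gaussMap^[n] α) : ℝ)⌋
        apply Int.le_floor.mpr
        push_cast
        rw [le_div_iff₀ hy.1]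
        linarith [hy.2]
      refine ⟨(cfK α (n+1) - 1).toNat, hα, ?_⟩
      have h := Int.toNat_of_nonneg (by linarith : (0:ℤ) ≤ cfK α (n+1) - 1)
      rw [h]
      ring
    · rintro ⟨k, h, _⟩
      exact h
  have hdisj : Pairwise (Function.onFun Disjoint Ak) := by
    intro i j hij
    simp only [Function.onFun, hAkdef]
    rw [Set.disjoint_left]
    rintro α ⟨_, hi⟩ ⟨_, hj⟩
    simp only [Set.mem_setOf_eq] at hi hj
    apply hij
    have h : (i:ℤ) + 1 = (j:ℤ) + 1 := hi.symm.trans hj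
    exact_mod_cast add_right_cancel h
  -- key identity
  have key : ∀ k : ℕ, volume (Ak k) = volume (Bk k) - volume (Ck k) := by
    intro k
    have hBC : volume (Ak k) = volume (Bk k \ Ck k) := by
      set N : Set ℝ := {α : ℝ | α ∈ Set.Ioo (0:ℝ) 1 ∧ Irrational α ∧
          gaussMap^[n] α = 1/(x+(k:ℝ)+1)} with hN
      have hNnull : volume N = 0 := fiber_null n _
      have hsub1 : Bk k \ Ck k ⊆ Ak k := by
        rintro α ⟨⟨h1, h2, h3, h4⟩, hC⟩
        rw [hAkE k]
        obtain ⟨hy, hyirr⟩ := iter_mem h1 h2 n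
        have h5 : ¬ gaussMap^[n] α ≤ 1/(x+(k:ℝ)+1) := fun hle => hC ⟨h1, h2, hle, h4⟩
        push_neg at h5
        have h6 : gaussMap^[n] α < 1/((k:ℝ)+1) :=
          lt_of_le_of_ne h3 (fun he => (not_irr_one_div_nat k) (he ▸ hyirr))
        exact ⟨⟨h1, h2, h4⟩, le_of_lt h5, h6⟩
      have hsub2 : Ak k ⊆ (Bk k \ Ck k) ∪ N := by
        intro α hα
        rw [hAkE k] at hα
        obtain ⟨⟨h1, h2, h4⟩, h5, h6⟩ := hα
        rcases eq_or_lt_of_le h5 with heq | hlt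
        · exact Or.inr ⟨h1, h2, heq.symm⟩
        · refine Or.inl ⟨⟨h1, h2, le_of_lt h6, h4⟩, ?_⟩
          rintro ⟨_, _, hle, _⟩
          linarith
      refine le_antisymm ?_ (measure_mono hsub1)
      calc volume (Ak k) ≤ volume ((Bk k \ Ck k) ∪ N) := measure_mono hsub2
        _ ≤ volume (Bk k \ Ck k) + volume N := measure_union_le _ _
        _ = volume (Bk k \ Ck k) := by rw [hNnull, add_zero]
    rw [hBC, measure_diff (hsub k) (hmeasCk k).nullMeasurableSet (hCfin k)]
  -- conclusion
  have hlhs : mGK G x t (n+1) = (volume A).toReal := rfl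
  rw [hlhs, hUnion, measure_iUnion hdisj hmeasAk, ENNReal.tsum_toReal_eq hAfin]
  refine tsum_congr fun k => ?_
  rw [key k, ENNReal.toReal_sub_of_le (measure_mono (hsub k)) (hBfin k)]
  rfl

end
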